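/- There exists an integer k₀ ≥ 3 such that for every integer k ≥ k₀, every real β ≥ k·ln 2 − 10·ln k and every integer p ≥ 1 the following holds in the clause message setup: if at least p of the indices j ∈ P with j ≠ x satisfy ν_j ≥ 1 − exp(−kβ/2), then N_x(1) ≥ exp(−exp(−p·k·β/3))·N_x(−1). -/

import Mathlib

open scoped Classical

/-- The (unnormalized) Belief Propagation message sent from a clause with positive-literal
positions `P` to the variable at position `x`, evaluated at the value `b`
(`true` stands for `1`, `false` for `-1`):
`N_x(b) = Σ_{s : s_x = b} ψ_β(s) ∏_{j ≠ x} w_j(s_j)` with `w_j(1) = ν j`, `w_j(-1) = 1 - ν j`,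
and `ψ_β(s) = 1` if `s` satisfies the clause and `exp (-β)` otherwise. -/
noncomputable def Nmsg (k : ℕ) (β : ℝ) (P : Finset (Fin k)) (ν : Fin k → ℝ)
    (x : Fin k) (b : Bool) : ℝ :=
  ∑ s ∈ Finset.univ.filter (fun s : Fin k → Bool => s x = b),
    (if ∃ j, (j ∈ P ∧ s j = true) ∨ (j ∉ P ∧ s j = false) then (1 : ℝ)
      else Real.exp (-β)) *
    ∏ j ∈ Finset.univ.erase x, (if s j then ν j else 1 - ν j)

/-- Summing the product of one-variable weights over all assignments with a fixed value at `x`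
gives `1`, when each pair of weights sums to `1`. -/
lemma sum_filter_prod_eq_one {k : ℕ} (x : Fin k) (b : Bool) (f : Fin k → Bool → ℝ)
    (hf : ∀ j, f j true + f j false = 1) :
    ∑ s ∈ Finset.univ.filter (fun s : Fin k → Bool => s x = b),
      ∏ j ∈ Finset.univ.erase x, f j (s j) = 1 := by
  classical
  set g : Fin k → Bool → ℝ := fun j c => if j = x then (if c = b then 1 else 0) else f j c
    with hg
  have key : ∑ s ∈ Finset.univ.filter (fun s : Fin k → Bool => s x = b),
      ∏ j ∈ Finset.univ.erase x, f j (s j)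
      = ∑ s : Fin k → Bool, ∏ j, g j (s j) := by
    rw [Finset.sum_filter]
    apply Finset.sum_congr rfl
    intro s _
    by_cases hsx : s x = b
    · simp only [hsx, if_true]
      rw [← Finset.mul_prod_erase Finset.univ _ (Finset.mem_univ x)]
      have hx : g x (s x) = 1 := by simp [hg, hsx]
      rw [hx, one_mul]
      apply Finset.prod_congr rfl
      intro j hj
      have : j ≠ x := (Finset.mem_erase.mp hj).1
      simp [hg, this]
    · simp only [hsx, if_false]
      symm
      apply Finset.prod_eq_zero (Finset.mem_univ x)
      simp [hg, hsx]
  rw [key, ← Fintype.prod_sum]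
  apply Finset.prod_eq_one
  intro j _
  rw [Fintype.sum_bool]
  by_cases hj : j = x
  · subst hj; cases b <;> simp [hg]
  · simpa [hg, hj] using hf j

/-- There is `k₀ ≥ 3` such that for `k ≥ k₀`, `β ≥ k ln 2 - 10 ln k` and `p ≥ 1`: if at least
`p` of the indices `j ∈ P` with `j ≠ x` satisfy `ν j ≥ 1 - exp (-kβ/2)`, then
`N_x(1) ≥ exp (-exp (-pkβ/3)) N_x(-1)`. -/
theorem stmt_5 :
    ∃ k₀ : ℕ, 3 ≤ k₀ ∧ ∀ k : ℕ, k₀ ≤ k → ∀ β : ℝ, 0 ≤ β →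
      (k : ℝ) * Real.log 2 - 10 * Real.log k ≤ β →
      ∀ p : ℕ, 1 ≤ p →
      ∀ (P : Finset (Fin k)) (x : Fin k) (ν : Fin k → ℝ),
        (∀ j, ν j ∈ Set.Icc (0 : ℝ) 1) →
        p ≤ ((P.erase x).filter fun j => 1 - Real.exp (-((k : ℝ) * β / 2)) ≤ ν j).card →
        Real.exp (-Real.exp (-((p : ℝ) * k * β / 3))) * Nmsg k β P ν x false ≤
          Nmsg k β P ν x true := by
  classical
  refine ⟨3600, by norm_num, ?_⟩
  intro k hk β hβ0 hβlog p hp P x ν hν hcard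
  -- basic facts
  have hk0 : (3600 : ℝ) ≤ (k : ℝ) := by exact_mod_cast hk
  have hν0 : ∀ j, 0 ≤ ν j := fun j => (hν j).1
  have hν1 : ∀ j, ν j ≤ 1 := fun j => (hν j).2
  -- β is at least 6
  have hβ6 : (6 : ℝ) ≤ β := by
    have hkpos : (0 : ℝ) < (k : ℝ) := by linarith
    have hsq : Real.sqrt k * Real.sqrt k = (k : ℝ) := Real.mul_self_sqrt (le_of_lt hkpos)
    have ht : (60 : ℝ) ≤ Real.sqrt k := by
      have h60 : Real.sqrt 3600 = 60 := by
        rw [show (3600 : ℝ) = 60 ^ 2 by norm_num, Real.sqrt_sq (by norm_num)]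
      calc (60 : ℝ) = Real.sqrt 3600 := h60.symm
        _ ≤ Real.sqrt k := Real.sqrt_le_sqrt hk0
    have hlogk : Real.log k ≤ 2 * Real.sqrt k - 2 := by
      have h1 : Real.log (Real.sqrt k) = Real.log k / 2 := Real.log_sqrt (le_of_lt hkpos)
      have h2 : Real.log (Real.sqrt k) ≤ Real.sqrt k - 1 :=
        Real.log_le_sub_one_of_pos (by positivity)
      linarith [h1 ▸ h2]
    have hlog2 : (0.6931471803 : ℝ) < Real.log 2 := Real.log_two_gt_d9
    nlinarith [hβlog, hsq, ht, hlogk, hlog2]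
  -- weights
  set W : (Fin k → Bool) → ℝ :=
    fun s => ∏ j ∈ Finset.univ.erase x, (if s j then ν j else 1 - ν j) with hW
  have hWnn : ∀ s, 0 ≤ W s := by
    intro s
    apply Finset.prod_nonneg
    intro j _
    by_cases h : s j <;> simp [h] <;> [exact hν0 j; linarith [hν1 j]]
  have hWsum : ∀ b : Bool,
      ∑ s ∈ Finset.univ.filter (fun s : Fin k → Bool => s x = b), W s = 1 := by
    intro b
    exact sum_filter_prod_eq_one x b (fun j c => if c then ν j else 1 - ν j)
      (fun j => by simp)
  have hψle1 : ∀ s : Fin k → Bool,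
      (if ∃ j, (j ∈ P ∧ s j = true) ∨ (j ∉ P ∧ s j = false) then (1 : ℝ)
        else Real.exp (-β)) ≤ 1 := by
    intro s
    split
    · exact le_refl 1
    · exact Real.exp_le_one_iff.mpr (by linarith)
  have hψnn : ∀ s : Fin k → Bool,
      (0:ℝ) ≤ (if ∃ j, (j ∈ P ∧ s j = true) ∨ (j ∉ P ∧ s j = false) then (1 : ℝ)
        else Real.exp (-β)) := by
    intro s; split
    · norm_num
    · exact (Real.exp_pos _).le
  by_cases hxP : x ∈ P
  · -- Case `x ∈ P` : `N_x(1) = 1` and `N_x(-1) ≤ 1`.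
    have htrue : Nmsg k β P ν x true = 1 := by
      rw [show (1:ℝ) = ∑ s ∈ Finset.univ.filter (fun s : Fin k → Bool => s x = true), W s
        from (hWsum true).symm]
      apply Finset.sum_congr rfl
      intro s hs
      have hsx : s x = true := (Finset.mem_filter.mp hs).2
      rw [if_pos ⟨x, Or.inl ⟨hxP, hsx⟩⟩, one_mul]
    have hfalse : Nmsg k β P ν x false ≤ 1 := by
      rw [show (1:ℝ) = ∑ s ∈ Finset.univ.filter (fun s : Fin k → Bool => s x = false), W s
        from (hWsum false).symm]
      apply Finset.sum_le_sum
      intro s _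
      exact mul_le_of_le_one_left (hWnn s) (hψle1 s)
    have hfnn : 0 ≤ Nmsg k β P ν x false := by
      apply Finset.sum_nonneg
      intro s _
      exact mul_nonneg (hψnn s) (hWnn s)
    calc Real.exp (-Real.exp (-((p : ℝ) * k * β / 3))) * Nmsg k β P ν x false
        ≤ 1 * Nmsg k β P ν x false := by
          apply mul_le_mul_of_nonneg_right _ hfnn
          exact Real.exp_le_one_iff.mpr (by simp only [neg_nonpos]; positivity)
      _ = Nmsg k β P ν x false := one_mul _
      _ ≤ 1 := hfalse
      _ = Nmsg k β P ν x true := htrue.symm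
  · -- Case `x ∉ P`.
    set ε : ℝ := Real.exp (-((k : ℝ) * β / 2)) with hε
    set δ : ℝ := Real.exp (-((p : ℝ) * k * β / 3)) with hδ
    set η : ℝ := Real.exp (-((p : ℝ) * k * β / 2)) with hη
    have hkβ : (0:ℝ) ≤ (k : ℝ) * β := by positivity
    have hpk6 : (6:ℝ) ≤ (p : ℝ) * k * β := by
      have hp1 : (1:ℝ) ≤ (p : ℝ) := by exact_mod_cast hp
      nlinarith [hk0, hβ6, hp1]
    -- the unique unsatisfying assignment
    set s₀ : Fin k → Bool := fun j => decide (j ∉ P) with hs₀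
    have hs₀x : s₀ x = true := by simp [hs₀, hxP]
    have hs₀mem : s₀ ∈ Finset.univ.filter (fun s : Fin k → Bool => s x = true) := by
      simp [hs₀x]
    -- N_x(-1) = 1
    have hfalse : Nmsg k β P ν x false = 1 := by
      rw [show (1:ℝ) = ∑ s ∈ Finset.univ.filter (fun s : Fin k → Bool => s x = false), W s
        from (hWsum false).symm]
      apply Finset.sum_congr rfl
      intro s hs
      have hsx : s x = false := (Finset.mem_filter.mp hs).2
      rw [if_pos ⟨x, Or.inr ⟨hxP, hsx⟩⟩, one_mul]
    -- N_x(1) ≥ 1 - W s₀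
    have htrue : 1 - W s₀ ≤ Nmsg k β P ν x true := by
      have hterm : ∀ s ∈ Finset.univ.filter (fun s : Fin k → Bool => s x = true),
          W s - (if s = s₀ then W s else 0) ≤
          (if ∃ j, (j ∈ P ∧ s j = true) ∨ (j ∉ P ∧ s j = false) then (1 : ℝ)
            else Real.exp (-β)) * W s := by
        intro s _
        by_cases hss : s = s₀
        · rw [if_pos hss, hss, sub_self]
          exact mul_nonneg (hψnn _) (hWnn _)
        · rw [if_neg hss]
          obtain ⟨j, hj⟩ : ∃ j, s j ≠ s₀ j := Function.ne_iff.mp hss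
          have hwit : ∃ j, (j ∈ P ∧ s j = true) ∨ (j ∉ P ∧ s j = false) := by
            refine ⟨j, ?_⟩
            by_cases hjP : j ∈ P
            · left
              refine ⟨hjP, ?_⟩
              have : s₀ j = false := by simp [hs₀, hjP]
              rw [this] at hj
              simpa using hj
            · right
              refine ⟨hjP, ?_⟩
              have : s₀ j = true := by simp [hs₀, hjP]
              rw [this] at hj
              simpa using hj
          rw [if_pos hwit, one_mul, sub_zero]
      calc 1 - W s₀
          = (∑ s ∈ Finset.univ.filter (fun s : Fin k → Bool => s x = true), W s)
            - ∑ s ∈ Finset.univ.filter (fun s : Fin k → Bool => s x = true),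
              (if s = s₀ then W s else 0) := by
            rw [hWsum true, Finset.sum_ite_eq' _ s₀ W, if_pos hs₀mem]
        _ = ∑ s ∈ Finset.univ.filter (fun s : Fin k → Bool => s x = true),
              (W s - (if s = s₀ then W s else 0)) := (Finset.sum_sub_distrib _ _).symm
        _ ≤ Nmsg k β P ν x true := Finset.sum_le_sum hterm
    -- W s₀ ≤ ε ^ p ≤ η
    have hε1 : ε ≤ 1 := Real.exp_le_one_iff.mpr (by linarith)
    have hWs₀ : W s₀ ≤ η := by
      set S : Finset (Fin k) :=
        (P.erase x).filter (fun j => 1 - Real.exp (-((k : ℝ) * β / 2)) ≤ ν j) with hS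
      have hSsub : S ⊆ Finset.univ.erase x := by
        intro j hj
        have hj' : j ∈ P.erase x := (Finset.mem_filter.mp hj).1
        exact Finset.mem_erase.mpr ⟨(Finset.mem_erase.mp hj').1, Finset.mem_univ j⟩
      have step1 : W s₀ ≤ ∏ j ∈ S, (if s₀ j then ν j else 1 - ν j) := by
        show (∏ j ∈ Finset.univ.erase x, (if s₀ j then ν j else 1 - ν j)) ≤
          ∏ j ∈ S, (if s₀ j then ν j else 1 - ν j)
        rw [← Finset.prod_sdiff hSsub]
        apply mul_le_of_le_one_left
        · apply Finset.prod_nonneg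
          intro j _
          by_cases h : s₀ j <;> simp [h] <;> [exact hν0 j; linarith [hν1 j]]
        · apply Finset.prod_le_one
          · intro j _
            by_cases h : s₀ j <;> simp [h] <;> [exact hν0 j; linarith [hν1 j]]
          · intro j _
            by_cases h : s₀ j <;> simp [h] <;> [exact hν1 j; linarith [hν0 j]]
      have step2 : ∏ j ∈ S, (if s₀ j then ν j else 1 - ν j) ≤ ε ^ S.card := by
        rw [← Finset.prod_const]
        apply Finset.prod_le_prod
        · intro j _
          by_cases h : s₀ j <;> simp [h] <;> [exact hν0 j; linarith [hν1 j]]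
        · intro j hj
          have hjP : j ∈ P := (Finset.mem_erase.mp (Finset.mem_filter.mp hj).1).2
          have hjν : 1 - Real.exp (-((k : ℝ) * β / 2)) ≤ ν j := (Finset.mem_filter.mp hj).2
          have : s₀ j = false := by simp [hs₀, hjP]
          rw [this]
          simp only [Bool.false_eq_true, if_false]
          rw [hε]
          linarith
      have step3 : ε ^ S.card ≤ ε ^ p :=
        pow_le_pow_of_le_one (Real.exp_nonneg _) hε1 hcard
      have step4 : ε ^ p = η := by
        rw [hε, hη, ← Real.exp_nat_mul]
        congr 1
        ring
      calc W s₀ ≤ ε ^ S.card := le_trans step1 step2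
        _ ≤ ε ^ p := step3
        _ = η := step4
    -- numeric comparison: exp(-δ) ≤ 1 - η
    have hδ1 : δ ≤ 1 := Real.exp_le_one_iff.mpr (by linarith)
    have hδ0 : 0 < δ := Real.exp_pos _
    have hηδ : η ≤ δ / 2 := by
      have hsplit : η = δ * Real.exp (-((p : ℝ) * k * β / 6)) := by
        rw [hη, hδ, ← Real.exp_add]
        congr 1
        ring
      have he : Real.exp (-((p : ℝ) * k * β / 6)) ≤ 1/2 := by
        have h1 : Real.exp (-((p : ℝ) * k * β / 6)) ≤ Real.exp (-1) := by
          apply Real.exp_le_exp.mpr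
          linarith
        have h2 : Real.exp (-1) ≤ 1/2 := by
          rw [Real.exp_neg]
          rw [inv_le_comm₀ (Real.exp_pos 1) (by norm_num)]
          have := Real.add_one_le_exp 1
          linarith
        linarith
      calc η = δ * Real.exp (-((p : ℝ) * k * β / 6)) := hsplit
        _ ≤ δ * (1/2) := by
            apply mul_le_mul_of_nonneg_left he hδ0.le
        _ = δ / 2 := by ring
    have hmain : Real.exp (-δ) ≤ 1 - η := by
      have h1 : (0:ℝ) < 1 + δ := by positivity
      have h2 : Real.exp (-δ) ≤ (1 + δ)⁻¹ := by
        rw [Real.exp_neg]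
        exact inv_anti₀ h1 (by linarith [Real.add_one_le_exp δ])
      have h3 : (1 + δ)⁻¹ ≤ 1 - δ / 2 := by
        rw [show (1+δ)⁻¹ = 1/(1+δ) from (one_div _).symm, div_le_iff₀ h1]
        nlinarith
      linarith
    calc Real.exp (-δ) * Nmsg k β P ν x false
        = Real.exp (-δ) := by rw [hfalse, mul_one]
      _ ≤ 1 - η := hmain
      _ ≤ 1 - W s₀ := by linarith
      _ ≤ Nmsg k β P ν x true := htrue
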